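/- arXiv:2303.09019 — 2 statements merged into one kernel-verified Lean document; each statement's English description precedes it below -/
import Mathlib

section
/- Let P be a finite poset and Φ a labeled flag on P. Then there exist a bijection ω : P → {1,…,#P} and a map ρ : P → ℤ_{>0} satisfying condition (LF) such that the set of (P,Φ)-partitions equals the set of (P,ω,ρ)-partitions. -/
/-- `f : P → ℤ_{>0}` is a `(P,Φ)`-partition for the labeled flag `Φ`: for every cover
`u ⋖ v` one has `f u ≥ f v`, with `f u > f v` whenever `Φ u > Φ v` (lexicographically),
and `f u ≤ val (Φ u)` for all `u`. -/
def IsPhiPart {P : Type*} [PartialOrder P] (Φ : P → ℕ+ ×ₗ ℕ+) (f : P → ℕ+) : Prop :=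
  (∀ u v : P, u ⋖ v → f v ≤ f u ∧ (Φ v < Φ u → f v < f u)) ∧
  ∀ u : P, f u ≤ (ofLex (Φ u)).1

/-- `f : P → ℤ_{>0}` is a `(P,ω,ρ)`-partition: for every cover `u ⋖ v` one has
`f u ≥ f v`, with `f u > f v` whenever `ω u > ω v`, and `f u ≤ ρ u` for all `u`. -/
def IsRestPart {P : Type*} [Fintype P] [PartialOrder P]
    (ω : P ≃ Fin (Fintype.card P)) (ρ : P → ℕ+) (f : P → ℕ+) : Prop :=
  (∀ u v : P, u ⋖ v → f v ≤ f u ∧ (ω v < ω u → f v < f u)) ∧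
  ∀ u : P, f u ≤ ρ u

/-- For any labeled flag `Φ` on a finite poset `P` there are a labeling `ω` and a
restriction `ρ` satisfying condition (LF) (`ρ u > ρ v → ω u > ω v`) such that the
`(P,Φ)`-partitions are exactly the `(P,ω,ρ)`-partitions. -/
theorem phiPart_eq_restPart {P : Type*} [Fintype P] [PartialOrder P]
    (Φ : P → ℕ+ ×ₗ ℕ+) (hΦ : Function.Injective Φ) :
    ∃ (ω : P ≃ Fin (Fintype.card P)) (ρ : P → ℕ+),
      (∀ u v : P, ρ v < ρ u → ω v < ω u) ∧
      ∀ f : P → ℕ+, IsPhiPart Φ f ↔ IsRestPart ω ρ f := by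
  classical
  set s : Finset (ℕ+ ×ₗ ℕ+) := Finset.univ.image Φ with hsdef
  have hs : s.card = Fintype.card P := by
    rw [hsdef, Finset.card_image_of_injective _ hΦ, Finset.card_univ]
  let e : Fin (Fintype.card P) ≃o s := s.orderIsoOfFin hs
  have hmem : ∀ u : P, Φ u ∈ s := fun u => by
    simp [hsdef]
  have hgbij : Function.Bijective (fun u : P => (⟨Φ u, hmem u⟩ : s)) := by
    rw [Fintype.bijective_iff_injective_and_card]
    constructor
    · intro u v huv
      exact hΦ (by simpa using congrArg Subtype.val huv)
    · rw [Fintype.card_coe, hs]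
  let g : P ≃ s := Equiv.ofBijective _ hgbij
  let ω : P ≃ Fin (Fintype.card P) := g.trans e.symm.toEquiv
  have hω : ∀ u v : P, ω u < ω v ↔ Φ u < Φ v := by
    intro u v
    show e.symm (g u) < e.symm (g v) ↔ _
    rw [OrderIso.lt_iff_lt]
    exact Iff.rfl
  refine ⟨ω, fun u => (ofLex (Φ u)).1, ?_, ?_⟩
  · intro u v h
    rw [hω]
    exact Prod.Lex.left _ _ h
  · intro f
    unfold IsPhiPart IsRestPart
    constructor
    · rintro ⟨h1, h2⟩
      exact ⟨fun u v huv => ⟨(h1 u v huv).1, fun h => (h1 u v huv).2 ((hω v u).mp h)⟩, h2⟩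
    · rintro ⟨h1, h2⟩
      exact ⟨fun u v huv => ⟨(h1 u v huv).1, fun h => (h1 u v huv).2 ((hω v u).mpr h)⟩, h2⟩
end

section
/- Let P be a finite poset, ω : P → {1,…,#P} a bijection and ρ : P → ℤ_{>0} a restriction such that (ω,ρ) satisfies condition (LF). Then there exists a labeled flag Φ on P such that the set of (P,Φ)-partitions equals the set of (P,ω,ρ)-partitions; one may take Φ(u) = (ρ(u), ω(u)). -/
/-- If `(ω,ρ)` satisfies condition (LF) (`ρ u > ρ v → ω u > ω v`), then there is a
labeled flag `Φ` on `P` — namely `Φ u = (ρ u, ω u)` — such that the `(P,Φ)`-partitions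
are exactly the `(P,ω,ρ)`-partitions.  (Here the label `ω u ∈ Fin (#P) = {0,…,#P−1}`
is identified with the element `ω u + 1` of `{1,…,#P}`.) -/
theorem restPart_eq_phiPart {P : Type*} [Fintype P] [PartialOrder P]
    (ω : P ≃ Fin (Fintype.card P)) (ρ : P → ℕ+)
    (hLF : ∀ u v : P, ρ v < ρ u → ω v < ω u) :
    ∃ Φ : P → ℕ+ ×ₗ ℕ+, Function.Injective Φ ∧
      Φ = (fun u => toLex (ρ u, ((ω u : ℕ)).succPNat)) ∧
      ∀ f : P → ℕ+, IsPhiPart Φ f ↔ IsRestPart ω ρ f := by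
  refine ⟨fun u => toLex (ρ u, ((ω u : ℕ)).succPNat), ?_, rfl, ?_⟩
  · intro u v h
    have h2 : ((ω u : ℕ)).succPNat = ((ω v : ℕ)).succPNat := congrArg (fun p => (ofLex p).2) h
    have : (ω u : ℕ) = (ω v : ℕ) := by
      simpa [Nat.succPNat] using congrArg (fun x : ℕ+ => (x : ℕ)) h2
    exact ω.injective (Fin.ext this)
  · have key : ∀ u v : P,
        (toLex (ρ v, ((ω v : ℕ)).succPNat) < toLex (ρ u, ((ω u : ℕ)).succPNat)) ↔ ω v < ω u := by
      intro u v
      rw [Prod.Lex.lt_iff]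
      constructor
      · rintro (h | ⟨h1, h2⟩)
        · exact hLF u v h
        · have : (ω v : ℕ) < (ω u : ℕ) := by
            have h3 := (PNat.coe_lt_coe _ _).mpr h2
            simp only [ofLex_toLex, Nat.succPNat_coe] at h3
            omega
          exact this
      · intro h
        rcases lt_trichotomy (ρ v) (ρ u) with h1 | h1 | h1
        · exact Or.inl h1
        · refine Or.inr ⟨h1, ?_⟩
          rw [← PNat.coe_lt_coe]
          simp only [ofLex_toLex, Nat.succPNat_coe]
          have := Fin.lt_iff_val_lt_val.mp h
          omega
        · exact absurd (hLF v u h1) (not_lt.mpr h.le)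
    intro f
    constructor
    · rintro ⟨hc, hb⟩
      exact ⟨fun u v h => ⟨(hc u v h).1, fun hw => (hc u v h).2 ((key u v).mpr hw)⟩,
        fun u => by simpa using hb u⟩
    · rintro ⟨hc, hb⟩
      exact ⟨fun u v h => ⟨(hc u v h).1, fun hw => (hc u v h).2 ((key u v).mp hw)⟩,
        fun u => by simpa using hb u⟩
end
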